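/- arXiv:0804.3357 — 2 statements merged into one kernel-verified Lean document; each statement's English description precedes it below -/
import Mathlib

section
/- Define a tensor product on A by (A ⊗ B)_k = A_k ⊗_ℚ B_k (with diagonal ℤ/2-action), (A ⊗ B)_∞ = A_∞ ⊗_ℚ B_∞, with structure map the composite A_∞ ⊗ B_∞ → (colim_n ∏_{k≥n} A_k) ⊗ (colim_n ∏_{k≥n} B_k) ≅ colim_n (∏_{k≥n} A_k ⊗ ∏_{k≥n} B_k) → colim_n ∏_{k≥n} (A_k ⊗ B_k). Then ⊗ makes A a symmetric monoidal category with unit cℚ. -/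
open scoped TensorProduct

universe u

variable {V W U : ℕ → Type u}
  [∀ k, AddCommGroup (V k)] [∀ k, Module ℚ (V k)]
  [∀ k, AddCommGroup (W k)] [∀ k, Module ℚ (W k)]
  [∀ k, AddCommGroup (U k)] [∀ k, Module ℚ (U k)]

/-- The submodule of eventually-zero sequences in `∏ k, V k`. -/
def evZero (V : ℕ → Type u) [∀ k, AddCommGroup (V k)] [∀ k, Module ℚ (V k)] :
    Submodule ℚ (∀ k, V k) where
  carrier := {x | ∃ N, ∀ k, N ≤ k → x k = 0}
  add_mem' := by
    rintro x y ⟨N, hN⟩ ⟨M, hM⟩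
    exact ⟨max N M, fun k hk => by
      simp [hN k (le_trans (le_max_left _ _) hk), hM k (le_trans (le_max_right _ _) hk)]⟩
  zero_mem' := ⟨0, fun k _ => rfl⟩
  smul_mem' := by
    rintro c x ⟨N, hN⟩
    exact ⟨N, fun k hk => by simp [hN k hk]⟩

/-- `colim_n ∏_{k ≥ n} V_k`, realised concretely as the quotient of `∏ k, V k` by the
submodule of eventually-zero sequences. -/
def VEnd (V : ℕ → Type u) [∀ k, AddCommGroup (V k)] [∀ k, Module ℚ (V k)] : Type u :=
  (∀ k, V k) ⧸ evZero V

instance : AddCommGroup (VEnd V) := by unfold VEnd; infer_instance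
instance : Module ℚ (VEnd V) := by unfold VEnd; infer_instance

/-- The class of a sequence in `VEnd V`. -/
def VEnd.mk : (∀ k, V k) →ₗ[ℚ] VEnd V := (evZero V).mkQ

/-- The map induced on `VEnd` by a family of linear maps. -/
def endMap (f : ∀ k, V k →ₗ[ℚ] W k) : VEnd V →ₗ[ℚ] VEnd W :=
  Submodule.mapQ _ _ (LinearMap.pi fun k => (f k).comp (LinearMap.proj k))
    (by rintro x ⟨N, hN⟩; exact ⟨N, fun k hk => by simp [LinearMap.pi, hN k hk]⟩)

@[simp] lemma endMap_mk (f : ∀ k, V k →ₗ[ℚ] W k) (x : ∀ k, V k) :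
    endMap f (VEnd.mk x) = VEnd.mk (fun k => f k (x k)) := rfl

@[simp] lemma endMap_id : endMap (fun k => (LinearMap.id : V k →ₗ[ℚ] V k)) = LinearMap.id := by
  refine Submodule.linearMap_qext _ ?_
  ext x
  rfl

lemma endMap_comp (f : ∀ k, V k →ₗ[ℚ] W k) (g : ∀ k, W k →ₗ[ℚ] U k) :
    endMap (fun k => (g k).comp (f k)) = (endMap g).comp (endMap f) := by
  refine Submodule.linearMap_qext _ ?_
  ext x
  rfl

lemma endMap_add (f g : ∀ k, V k →ₗ[ℚ] W k) :
    endMap (fun k => f k + g k) = endMap f + endMap g := by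
  refine Submodule.linearMap_qext _ ?_
  ext x
  show endMap _ (VEnd.mk x) = endMap f (VEnd.mk x) + endMap g (VEnd.mk x)
  simp only [endMap_mk]
  rw [← map_add]
  rfl

lemma endMap_smul (c : ℚ) (f : ∀ k, V k →ₗ[ℚ] W k) :
    endMap (fun k => c • f k) = c • endMap f := by
  refine Submodule.linearMap_qext _ ?_
  ext x
  show endMap _ (VEnd.mk x) = c • endMap f (VEnd.mk x)
  simp only [endMap_mk]
  rw [← map_smul]
  rfl

lemma endMap_zero : endMap (fun k => (0 : V k →ₗ[ℚ] W k)) = 0 := by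
  refine Submodule.linearMap_qext _ ?_
  ext x
  show endMap _ (VEnd.mk x) = 0
  simp only [endMap_mk]
  show VEnd.mk (fun _ => 0) = 0
  rw [← map_zero (VEnd.mk (V := W))]
  rfl

/-- An object of the algebraic model `𝒜(𝒟)` (in the ungraded setting): a rational vector
space `Vinf` (the stalk at `∞`, with trivial `ℤ/2`-action), rational vector spaces `V k`
with a `ℤ/2`-action (given by the involution `w k`) for each `k`, and an equivariant
linear structure map `sig : Vinf → colim_n ∏_{k ≥ n} V k`. -/
structure AObj : Type (u + 1) where
  Vinf : Type u
  [addInf : AddCommGroup Vinf]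
  [modInf : Module ℚ Vinf]
  V : ℕ → Type u
  [addV : ∀ k, AddCommGroup (V k)]
  [modV : ∀ k, Module ℚ (V k)]
  w : ∀ k, V k →ₗ[ℚ] V k
  w_sq : ∀ k, (w k).comp (w k) = LinearMap.id
  sig : Vinf →ₗ[ℚ] VEnd V
  sig_w : (endMap w).comp sig = sig

attribute [instance] AObj.addInf AObj.modInf AObj.addV AObj.modV

/-- A morphism in the algebraic model: a linear map at `∞` and `ℤ/2`-equivariant linear
maps at each `k`, compatible with the structure maps. -/
@[ext] structure AHom (A B : AObj.{u}) : Type u where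
  finf : A.Vinf →ₗ[ℚ] B.Vinf
  f : ∀ k, A.V k →ₗ[ℚ] B.V k
  equivar : ∀ k, (f k).comp (A.w k) = (B.w k).comp (f k)
  comm : (endMap f).comp A.sig = B.sig.comp finf

open CategoryTheory

instance : Category AObj.{u} where
  Hom := AHom
  id A := ⟨LinearMap.id, fun _ => LinearMap.id, fun k => by simp, by simp⟩
  comp {A B C} f g :=
    ⟨g.finf.comp f.finf, fun k => (g.f k).comp (f.f k),
      fun k => by
        rw [LinearMap.comp_assoc, f.equivar k, ← LinearMap.comp_assoc, g.equivar k,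
          LinearMap.comp_assoc],
      by
        rw [endMap_comp, LinearMap.comp_assoc, f.comm, ← LinearMap.comp_assoc, g.comm,
          LinearMap.comp_assoc]⟩
  id_comp f := by apply AHom.ext <;> rfl
  comp_id f := by apply AHom.ext <;> rfl
  assoc f g h := by apply AHom.ext <;> rfl

@[simp] lemma AHom_id_f (A : AObj) (k : ℕ) : AHom.f (𝟙 A) k = LinearMap.id := rfl
@[simp] lemma AHom_id_finf (A : AObj) : AHom.finf (𝟙 A) = LinearMap.id := rfl
@[simp] lemma AHom_comp_f {A B C : AObj} (f : A ⟶ B) (g : B ⟶ C) (k : ℕ) :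
    AHom.f (f ≫ g) k = (g.f k).comp (f.f k) := rfl
@[simp] lemma AHom_comp_finf {A B C : AObj} (f : A ⟶ B) (g : B ⟶ C) :
    AHom.finf (f ≫ g) = g.finf.comp f.finf := rfl

/-- Addition of morphisms (the hom-sets of `𝒜(𝒟)` are `ℚ`-vector spaces). -/
instance (A B : AObj) : Add (AHom A B) :=
  ⟨fun f g =>
    ⟨f.finf + g.finf, fun k => f.f k + g.f k,
      fun k => by
        rw [LinearMap.add_comp, LinearMap.comp_add, f.equivar k, g.equivar k],
      by rw [endMap_add, LinearMap.add_comp, LinearMap.comp_add, f.comm, g.comm]⟩⟩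

instance (A B : AObj) : Zero (AHom A B) :=
  ⟨⟨0, fun _ => 0, fun k => by simp, by rw [endMap_zero]; simp⟩⟩

instance (A B : AObj) : SMul ℚ (AHom A B) :=
  ⟨fun c f =>
    ⟨c • f.finf, fun k => c • f.f k,
      fun k => by rw [LinearMap.smul_comp, LinearMap.comp_smul, f.equivar k],
      by rw [endMap_smul, LinearMap.smul_comp, LinearMap.comp_smul, f.comm]⟩⟩

instance (A B : AObj.{u}) : Add (A ⟶ B) := inferInstanceAs (Add (AHom A B))
instance (A B : AObj.{u}) : Zero (A ⟶ B) := inferInstanceAs (Zero (AHom A B))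
instance (A B : AObj.{u}) : SMul ℚ (A ⟶ B) := inferInstanceAs (SMul ℚ (AHom A B))

open CategoryTheory Limits

/-- The stalk functor `p_k : 𝒜(𝒟) → ℚ-Mod` (forgetting the `ℤ/2`-action). -/
@[simps] def pkFun (k : ℕ) : AObj.{u} ⥤ ModuleCat.{u} ℚ where
  obj A := ModuleCat.of ℚ (A.V k)
  map φ := ModuleCat.ofHom (φ.f k)

/-- The stalk-at-`∞` functor `p_∞ : 𝒜(𝒟) → ℚ-Mod`. -/
@[simps] def pinfFun : AObj.{u} ⥤ ModuleCat.{u} ℚ where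
  obj A := ModuleCat.of ℚ A.Vinf
  map φ := ModuleCat.ofHom φ.finf

/-- The constant object `cM`: all stalks equal to `M` with trivial `ℤ/2`-action, and
structure map induced by the diagonal `M → ∏_k M`. -/
def cObj (M : Type u) [AddCommGroup M] [Module ℚ M] : AObj.{u} where
  Vinf := M
  V _ := M
  w _ := LinearMap.id
  w_sq _ := by simp
  sig := VEnd.mk.comp (LinearMap.pi fun _ => LinearMap.id)
  sig_w := by rw [endMap_id]; simp

/-- `⊞_N V`, the pullback of `V_∞ → colim_n ∏_{k ≥ n} V_k ← ∏_{k ≥ N} V_k`, realised as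
the submodule of `V_∞ × ∏_k V_k` of pairs `(v, x)` with `σ(v) = [x]` and `x k = 0` for
`k < N`.  (Stalks are indexed by `ℕ` starting at `0`, so the paper's `⊞_1` is `BoxPlus 0`
and the paper's `⊞_N` is `BoxPlus (N-1)`.) -/
def BoxPlus (N : ℕ) (A : AObj.{u}) : Submodule ℚ (A.Vinf × ∀ k, A.V k) where
  carrier := {p | A.sig p.1 = VEnd.mk p.2 ∧ ∀ k < N, p.2 k = 0}
  add_mem' := by
    rintro p q ⟨hp, hp'⟩ ⟨hq, hq'⟩
    refine ⟨?_, fun k hk => by simp [hp' k hk, hq' k hk]⟩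
    show A.sig (p.1 + q.1) = VEnd.mk (p.2 + q.2)
    rw [map_add, map_add, hp, hq]
  zero_mem' := by
    refine ⟨?_, fun k _ => rfl⟩
    show A.sig 0 = VEnd.mk 0
    simp
  smul_mem' := by
    rintro c p ⟨hp, hp'⟩
    refine ⟨?_, fun k hk => by simp [hp' k hk]⟩
    show A.sig (c • p.1) = VEnd.mk (c • p.2)
    rw [map_smul, map_smul, hp]

/-- The ambient linear map underlying the induced map `⊞_N A → ⊞_N B` of a morphism. -/
def boxAmbient {A B : AObj.{u}} (φ : A ⟶ B) :
    (A.Vinf × ∀ k, A.V k) →ₗ[ℚ] (B.Vinf × ∀ k, B.V k) :=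
  LinearMap.prodMap φ.finf (LinearMap.pi fun k => (φ.f k).comp (LinearMap.proj k))

lemma boxAmbient_mem {A B : AObj.{u}} (φ : A ⟶ B) (N : ℕ) {p : A.Vinf × ∀ k, A.V k}
    (hp : p ∈ BoxPlus N A) : boxAmbient φ p ∈ BoxPlus N B := by
  obtain ⟨h1, h2⟩ := hp
  constructor
  · show B.sig (φ.finf p.1) = VEnd.mk fun k => φ.f k (p.2 k)
    have := congrArg (fun g => g p.1) φ.comm.symm
    simp only [LinearMap.comp_apply] at this
    rw [this, h1, endMap_mk]
  · intro k hk
    show φ.f k (p.2 k) = 0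
    rw [h2 k hk, map_zero]

/-- The induced map `⊞_N A → ⊞_N B` of a morphism of `𝒜(𝒟)`. -/
def boxMap {A B : AObj.{u}} (φ : A ⟶ B) (N : ℕ) : BoxPlus N A →ₗ[ℚ] BoxPlus N B :=
  (boxAmbient φ).restrict fun _ hp => boxAmbient_mem φ N hp

/-- The involution (`ℤ/2`-action) on `⊞_N A`. -/
def wBox (A : AObj.{u}) (N : ℕ) : BoxPlus N A →ₗ[ℚ] BoxPlus N A :=
  boxMap (show A ⟶ A from
    ⟨LinearMap.id, A.w, fun k => rfl, by
      rw [A.sig_w]; rfl⟩) N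

/-- The `⊞_1 = BoxPlus 0` functor `𝒜(𝒟) → ℚ-Mod`. -/
@[simps] def box0Fun : AObj.{u} ⥤ ModuleCat.{u} ℚ where
  obj A := ModuleCat.of ℚ (BoxPlus 0 A)
  map φ := ModuleCat.ofHom (boxMap φ 0)
  map_id A := by
    refine ModuleCat.hom_ext (LinearMap.ext fun p => ?_)
    apply Subtype.ext
    rfl
  map_comp f g := by
    refine ModuleCat.hom_ext (LinearMap.ext fun p => ?_)
    apply Subtype.ext
    rfl

/-- The submodule of `(v, x)` with all `x k` fixed by the involutions. -/
def fixCond (A : AObj.{u}) : Submodule ℚ (A.Vinf × ∀ k, A.V k) where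
  carrier := {p | ∀ k, A.w k (p.2 k) = p.2 k}
  add_mem' := by
    intro p q hp hq k
    show A.w k (p.2 k + q.2 k) = _
    rw [map_add, hp k, hq k]
    rfl
  zero_mem' := by
    intro k
    show A.w k 0 = 0
    simp
  smul_mem' := by
    intro c p hp k
    show A.w k (c • p.2 k) = _
    rw [map_smul, hp k]
    rfl

/-- `(⊞_N V)^{ℤ/2}`, the `ℤ/2`-fixed points of `⊞_N V`. -/
def BoxW (N : ℕ) (A : AObj.{u}) : Submodule ℚ (A.Vinf × ∀ k, A.V k) :=
  BoxPlus N A ⊓ fixCond A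

lemma boxAmbient_memW {A B : AObj.{u}} (φ : A ⟶ B) (N : ℕ) {p : A.Vinf × ∀ k, A.V k}
    (hp : p ∈ BoxW N A) : boxAmbient φ p ∈ BoxW N B := by
  refine ⟨boxAmbient_mem φ N hp.1, fun k => ?_⟩
  show B.w k (φ.f k (p.2 k)) = φ.f k (p.2 k)
  have := congrArg (fun g => g (p.2 k)) (φ.equivar k)
  simp only [LinearMap.comp_apply] at this
  rw [← this, hp.2 k]

/-- The map induced on `ℤ/2`-fixed points of `⊞_N`. -/
def boxWMap {A B : AObj.{u}} (φ : A ⟶ B) (N : ℕ) : BoxW N A →ₗ[ℚ] BoxW N B :=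
  (boxAmbient φ).restrict fun _ hp => boxAmbient_memW φ N hp

/-- The functor `V ↦ (⊞_N V)^{ℤ/2}` from `𝒜(𝒟)` to `ℚ`-modules. -/
@[simps] def boxWFun (N : ℕ) : AObj.{u} ⥤ ModuleCat.{u} ℚ where
  obj A := ModuleCat.of ℚ (BoxW N A)
  map φ := ModuleCat.ofHom (boxWMap φ N)
  map_id A := by
    refine ModuleCat.hom_ext (LinearMap.ext fun p => ?_)
    apply Subtype.ext
    rfl
  map_comp f g := by
    refine ModuleCat.hom_ext (LinearMap.ext fun p => ?_)
    apply Subtype.ext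
    rfl

/-- The ambient map `(v, x) ↦ (v, x with coordinate N zeroed out)`. -/
def zeroAmbient (A : AObj.{u}) (N : ℕ) :
    (A.Vinf × ∀ k, A.V k) →ₗ[ℚ] (A.Vinf × ∀ k, A.V k) :=
  LinearMap.prodMap LinearMap.id
    (LinearMap.pi fun k => if k = N then 0 else LinearMap.proj k)

lemma zeroAmbient_mem (A : AObj.{u}) (N : ℕ) {p : A.Vinf × ∀ k, A.V k}
    (hp : p ∈ BoxW N A) : zeroAmbient A N p ∈ BoxW (N + 1) A := by
  obtain ⟨⟨h1, h2⟩, h3⟩ := hp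
  have hx : (zeroAmbient A N p).2 = fun k => if k = N then 0 else p.2 k := by
    funext k
    show (if k = N then (0 : (∀ j, A.V j) →ₗ[ℚ] A.V k) else LinearMap.proj k) p.2 = _
    split_ifs <;> rfl
  refine ⟨⟨?_, ?_⟩, ?_⟩
  · show A.sig p.1 = VEnd.mk (zeroAmbient A N p).2
    rw [h1, hx]
    show Submodule.Quotient.mk _ = Submodule.Quotient.mk _
    rw [Submodule.Quotient.eq]
    exact ⟨N + 1, fun k hk => by
      have : k ≠ N := by omega
      simp [this]⟩
  · intro k hk
    rw [hx]
    by_cases h : k = N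
    · simp [h]
    · have : k < N := by omega
      simp [h, h2 k this]
  · intro k
    rw [hx]
    by_cases h : k = N
    · simp [h]
    · simpa [h] using h3 k

/-- The natural transformation `(⊞_N)^{ℤ/2} ⟶ (⊞_{N+1})^{ℤ/2}` which zeroes out the
coordinate `N`. -/
@[simps] def zeroNatTrans (N : ℕ) : boxWFun.{u} N ⟶ boxWFun.{u} (N + 1) where
  app A := ModuleCat.ofHom ((zeroAmbient A N).restrict fun _ hp => zeroAmbient_mem A N hp)
  naturality A B φ := by
    refine ModuleCat.hom_ext (LinearMap.ext fun p => ?_)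
    obtain ⟨⟨v, x⟩, hp⟩ := p
    apply Subtype.ext
    apply Prod.ext
    · rfl
    · funext k
      show (if k = N then (0 : (∀ j, B.V j) →ₗ[ℚ] B.V k) else LinearMap.proj k)
          (fun j => φ.f j (x j)) =
        φ.f k ((if k = N then (0 : (∀ j, A.V j) →ₗ[ℚ] A.V k) else LinearMap.proj k) x)
      split_ifs <;> simp

/-! ### Tensor products -/

/-- The bilinear map `∏ V × ∏ W → ∏ (V ⊗ W)`. -/
noncomputable def tmulPi (x : ∀ k, V k) : (∀ k, W k) →ₗ[ℚ] ∀ k, (V k ⊗[ℚ] W k) :=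
  LinearMap.pi fun k => (TensorProduct.mk ℚ (V k) (W k) (x k)).comp (LinearMap.proj k)

/-- `tmulPi` as a linear map in the first variable. -/
noncomputable def tmulPiL : (∀ k, V k) →ₗ[ℚ] (∀ k, W k) →ₗ[ℚ] ∀ k, (V k ⊗[ℚ] W k) where
  toFun := tmulPi
  map_add' x x' := by
    refine LinearMap.ext fun y => funext fun k => ?_
    show (x k + x' k) ⊗ₜ[ℚ] y k = x k ⊗ₜ[ℚ] y k + x' k ⊗ₜ[ℚ] y k
    rw [TensorProduct.add_tmul]
  map_smul' c x := by
    refine LinearMap.ext fun y => funext fun k => ?_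
    show (c • x k) ⊗ₜ[ℚ] y k = c • (x k ⊗ₜ[ℚ] y k)
    rw [TensorProduct.smul_tmul']

/-- `x ↦ ([y] ↦ [k ↦ x k ⊗ y k])`, before descending in `x`. -/
noncomputable def innerEnd (x : ∀ k, V k) : VEnd W →ₗ[ℚ] VEnd (fun k => V k ⊗[ℚ] W k) :=
  Submodule.liftQ (evZero W) (VEnd.mk.comp (tmulPi x))
    (by
      rintro y ⟨N, hN⟩
      rw [LinearMap.mem_ker]
      show VEnd.mk (tmulPi x y) = 0
      show Submodule.Quotient.mk _ = 0
      rw [Submodule.Quotient.mk_eq_zero]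
      exact ⟨N, fun k hk => by
        show x k ⊗ₜ[ℚ] y k = 0
        rw [hN k hk, TensorProduct.tmul_zero]⟩)

/-- `innerEnd` as a linear map in `x`. -/
noncomputable def innerEndL : (∀ k, V k) →ₗ[ℚ] VEnd W →ₗ[ℚ] VEnd (fun k => V k ⊗[ℚ] W k) where
  toFun := innerEnd
  map_add' x x' := by
    refine Submodule.linearMap_qext _ (LinearMap.ext fun y => ?_)
    show VEnd.mk (tmulPi (x + x') y) = VEnd.mk (tmulPi x y) + VEnd.mk (tmulPi x' y)
    rw [show tmulPi (x + x') y = tmulPi x y + tmulPi x' y from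
      funext fun k => TensorProduct.add_tmul _ _ _, map_add]
  map_smul' c x := by
    refine Submodule.linearMap_qext _ (LinearMap.ext fun y => ?_)
    show VEnd.mk (tmulPi (c • x) y) = c • VEnd.mk (tmulPi x y)
    rw [show tmulPi (c • x) y = c • tmulPi x y from
      funext fun k => (TensorProduct.smul_tmul' _ _ _).symm, map_smul]

/-- The bilinear map `VEnd V × VEnd W → VEnd (V ⊗ W)`,
`([x], [y]) ↦ [k ↦ x k ⊗ y k]`. -/
noncomputable def endTmul : VEnd V →ₗ[ℚ] VEnd W →ₗ[ℚ] VEnd (fun k => V k ⊗[ℚ] W k) :=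
  Submodule.liftQ (evZero V) innerEndL
    (by
      rintro x ⟨N, hN⟩
      rw [LinearMap.mem_ker]
      refine Submodule.linearMap_qext _ (LinearMap.ext fun y => ?_)
      show VEnd.mk (tmulPi x y) = 0
      show Submodule.Quotient.mk _ = 0
      rw [Submodule.Quotient.mk_eq_zero]
      exact ⟨N, fun k hk => by
        show x k ⊗ₜ[ℚ] y k = 0
        rw [hN k hk, TensorProduct.zero_tmul]⟩)

@[simp] lemma endTmul_mk_mk (x : ∀ k, V k) (y : ∀ k, W k) :
    endTmul (VEnd.mk x) (VEnd.mk y) = VEnd.mk (fun k => x k ⊗ₜ[ℚ] y k) := rfl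

lemma endTmul_natural {V' W' : ℕ → Type u}
    [∀ k, AddCommGroup (V' k)] [∀ k, Module ℚ (V' k)]
    [∀ k, AddCommGroup (W' k)] [∀ k, Module ℚ (W' k)]
    (f : ∀ k, V k →ₗ[ℚ] V' k) (g : ∀ k, W k →ₗ[ℚ] W' k)
    (a : VEnd V) (b : VEnd W) :
    endMap (fun k => TensorProduct.map (f k) (g k)) (endTmul a b) =
      endTmul (endMap f a) (endMap g b) := by
  obtain ⟨x, rfl⟩ := Submodule.Quotient.mk_surjective _ a
  obtain ⟨y, rfl⟩ := Submodule.Quotient.mk_surjective _ b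
  rfl

/-- The tensor product in `𝒜(𝒟)`: stalk-wise tensor product `(A ⊗ B)_k = A_k ⊗ B_k`
(with diagonal `ℤ/2`-action), `(A ⊗ B)_∞ = A_∞ ⊗ B_∞`, with the structure map obtained
from the two structure maps together with the canonical map
`(colim_n ∏ A_k) ⊗ (colim_n ∏ B_k) → colim_n ∏ (A_k ⊗ B_k)`. -/
noncomputable def tensorObjA (A B : AObj.{u}) : AObj.{u} where
  Vinf := A.Vinf ⊗[ℚ] B.Vinf
  V k := A.V k ⊗[ℚ] B.V k
  w k := TensorProduct.map (A.w k) (B.w k)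
  w_sq k := by
    rw [← TensorProduct.map_comp, A.w_sq, B.w_sq]
    exact TensorProduct.map_id
  sig := (TensorProduct.lift endTmul).comp (TensorProduct.map A.sig B.sig)
  sig_w := by
    apply TensorProduct.ext'
    intro a b
    show endMap _ (TensorProduct.lift endTmul (A.sig a ⊗ₜ[ℚ] B.sig b)) =
      TensorProduct.lift endTmul (A.sig a ⊗ₜ[ℚ] B.sig b)
    rw [TensorProduct.lift.tmul]
    rw [endTmul_natural A.w B.w (A.sig a) (B.sig b)]
    have ha : endMap A.w (A.sig a) = A.sig a := congrArg (fun h => h a) A.sig_w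
    have hb : endMap B.w (B.sig b) = B.sig b := congrArg (fun h => h b) B.sig_w
    rw [ha, hb]


/-! ### Auxiliary material for the symmetric monoidal structure -/

section Aux

@[simp] lemma tensorObjA_sig_tmul (A B : AObj.{u}) (a : A.Vinf) (b : B.Vinf) :
    (tensorObjA A B).sig (a ⊗ₜ[ℚ] b) = endTmul (A.sig a) (B.sig b) := rfl

lemma ext_threefold'' {M N P Q : Type u} [AddCommGroup M] [Module ℚ M]
    [AddCommGroup N] [Module ℚ N] [AddCommGroup P] [Module ℚ P]
    [AddCommGroup Q] [Module ℚ Q]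
    {g h : M ⊗[ℚ] (N ⊗[ℚ] P) →ₗ[ℚ] Q}
    (H : ∀ x y z, g (x ⊗ₜ (y ⊗ₜ z)) = h (x ⊗ₜ (y ⊗ₜ z))) : g = h := by
  apply TensorProduct.ext'
  intro x p
  induction p using TensorProduct.induction_on with
  | zero => rw [TensorProduct.tmul_zero, map_zero, map_zero]
  | tmul y z => exact H x y z
  | add a b ha hb => rw [TensorProduct.tmul_add, map_add, map_add, ha, hb]

lemma endTmul_assoc (a : VEnd V) (b : VEnd W) (c : VEnd U) :
    endMap (fun k => (TensorProduct.assoc ℚ (V k) (W k) (U k)).toLinearMap)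
      (endTmul (endTmul a b) c) = endTmul a (endTmul b c) := by
  obtain ⟨x, rfl⟩ := Submodule.Quotient.mk_surjective _ a
  obtain ⟨y, rfl⟩ := Submodule.Quotient.mk_surjective _ b
  obtain ⟨z, rfl⟩ := Submodule.Quotient.mk_surjective _ c
  rfl

lemma endTmul_comm (a : VEnd V) (b : VEnd W) :
    endMap (fun k => (TensorProduct.comm ℚ (V k) (W k)).toLinearMap)
      (endTmul a b) = endTmul b a := by
  obtain ⟨x, rfl⟩ := Submodule.Quotient.mk_surjective _ a
  obtain ⟨y, rfl⟩ := Submodule.Quotient.mk_surjective _ b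
  rfl

lemma endTmul_lid {X : ℕ → Type} [∀ k, AddCommGroup (X k)] [∀ k, Module ℚ (X k)]
    (q : ℚ) (b : VEnd X) :
    endMap (fun k => (TensorProduct.lid ℚ (X k)).toLinearMap)
      (endTmul (V := fun _ => ℚ) (VEnd.mk fun _ => q) b) = q • b := by
  obtain ⟨y, rfl⟩ := Submodule.Quotient.mk_surjective _ b
  exact map_smul (VEnd.mk (V := X)) q y

lemma endTmul_rid {X : ℕ → Type} [∀ k, AddCommGroup (X k)] [∀ k, Module ℚ (X k)]
    (q : ℚ) (b : VEnd X) :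
    endMap (fun k => (TensorProduct.rid ℚ (X k)).toLinearMap)
      (endTmul (W := fun _ => ℚ) b (VEnd.mk fun _ => q)) = q • b := by
  obtain ⟨y, rfl⟩ := Submodule.Quotient.mk_surjective _ b
  exact map_smul (VEnd.mk (V := X)) q y

/-- The tensor product of two morphisms in `𝒜(𝒟)`. -/
noncomputable def tensorHomA {A A' B B' : AObj.{u}} (f : A ⟶ A') (g : B ⟶ B') :
    tensorObjA A B ⟶ tensorObjA A' B' where
  finf := TensorProduct.map f.finf g.finf
  f k := TensorProduct.map (f.f k) (g.f k)
  equivar k := by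
    show (TensorProduct.map (f.f k) (g.f k)).comp (TensorProduct.map (A.w k) (B.w k)) =
      (TensorProduct.map (A'.w k) (B'.w k)).comp (TensorProduct.map (f.f k) (g.f k))
    rw [← TensorProduct.map_comp, ← TensorProduct.map_comp, f.equivar, g.equivar]
  comm := by
    apply TensorProduct.ext'
    intro a b
    show endMap (fun k => TensorProduct.map (f.f k) (g.f k))
        (endTmul (A.sig a) (B.sig b)) =
      endTmul (A'.sig (f.finf a)) (B'.sig (g.finf b))
    rw [endTmul_natural]
    have hf : endMap f.f (A.sig a) = A'.sig (f.finf a) := LinearMap.congr_fun f.comm a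
    have hg : endMap g.f (B.sig b) = B'.sig (g.finf b) := LinearMap.congr_fun g.comm b
    rw [hf, hg]

/-- Build an isomorphism in `𝒜(𝒟)` from componentwise linear equivalences. -/
noncomputable def mkIsoA {A B : AObj.{u}} (einf : A.Vinf ≃ₗ[ℚ] B.Vinf)
    (e : ∀ k, A.V k ≃ₗ[ℚ] B.V k)
    (equivar : ∀ k, ((e k : A.V k →ₗ[ℚ] B.V k)).comp (A.w k) =
      (B.w k).comp (e k : A.V k →ₗ[ℚ] B.V k))
    (comm : (endMap fun k => (e k : A.V k →ₗ[ℚ] B.V k)).comp A.sig =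
      B.sig.comp (einf : A.Vinf →ₗ[ℚ] B.Vinf)) :
    A ≅ B where
  hom := ⟨einf, fun k => e k, equivar, comm⟩
  inv :=
    { finf := einf.symm
      f := fun k => (e k).symm
      equivar := fun k => LinearMap.ext fun x => (e k).injective (by
        have h := LinearMap.congr_fun (equivar k) ((e k).symm x)
        simp only [LinearMap.comp_apply, LinearEquiv.coe_coe] at h ⊢
        simp only [LinearEquiv.apply_symm_apply] at h ⊢
        exact h.symm)
      comm := by
        refine LinearMap.ext fun x => ?_
        have h1 : endMap (fun k => (e k : A.V k →ₗ[ℚ] B.V k)) (A.sig (einf.symm x)) =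
            B.sig x := by
          have h := LinearMap.congr_fun comm (einf.symm x)
          simp only [LinearMap.comp_apply, LinearEquiv.coe_coe,
            LinearEquiv.apply_symm_apply] at h
          exact h
        have h2 : (fun k => ((e k).symm : B.V k →ₗ[ℚ] A.V k).comp
            (e k : A.V k →ₗ[ℚ] B.V k)) = fun k => (LinearMap.id : A.V k →ₗ[ℚ] A.V k) :=
          funext fun k => LinearMap.ext fun y => (e k).symm_apply_apply y
        calc (endMap fun k => ((e k).symm : B.V k →ₗ[ℚ] A.V k)) (B.sig x)
            = (endMap fun k => ((e k).symm : B.V k →ₗ[ℚ] A.V k))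
                ((endMap fun k => (e k : A.V k →ₗ[ℚ] B.V k)) (A.sig (einf.symm x))) := by
              rw [h1]
          _ = A.sig (einf.symm x) := by
              rw [← LinearMap.comp_apply, ← endMap_comp, h2, endMap_id, LinearMap.id_apply] }
  hom_inv_id := by
    apply AHom.ext
    · exact LinearMap.ext fun x => einf.symm_apply_apply x
    · exact funext fun k => LinearMap.ext fun x => (e k).symm_apply_apply x
  inv_hom_id := by
    apply AHom.ext
    · exact LinearMap.ext fun x => einf.apply_symm_apply x
    · exact funext fun k => LinearMap.ext fun x => (e k).apply_symm_apply x

/-- The associator. -/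
noncomputable def assocIsoA (A B C : AObj.{u}) :
    tensorObjA (tensorObjA A B) C ≅ tensorObjA A (tensorObjA B C) :=
  mkIsoA (TensorProduct.assoc ℚ A.Vinf B.Vinf C.Vinf)
    (fun k => TensorProduct.assoc ℚ (A.V k) (B.V k) (C.V k))
    (fun k => TensorProduct.ext_threefold fun x y z => rfl)
    (by
      apply TensorProduct.ext_threefold
      intro a b c
      show endMap (fun k => (TensorProduct.assoc ℚ (A.V k) (B.V k) (C.V k)).toLinearMap)
          (endTmul (endTmul (A.sig a) (B.sig b)) (C.sig c)) =
        endTmul (A.sig a) (endTmul (B.sig b) (C.sig c))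
      exact endTmul_assoc _ _ _)

/-- The braiding. -/
noncomputable def braidIsoA (A B : AObj.{u}) : tensorObjA A B ≅ tensorObjA B A :=
  mkIsoA (TensorProduct.comm ℚ A.Vinf B.Vinf)
    (fun k => TensorProduct.comm ℚ (A.V k) (B.V k))
    (fun k => TensorProduct.ext' fun x y => rfl)
    (by
      apply TensorProduct.ext'
      intro a b
      show endMap (fun k => (TensorProduct.comm ℚ (A.V k) (B.V k)).toLinearMap)
          (endTmul (A.sig a) (B.sig b)) = endTmul (B.sig b) (A.sig a)
      exact endTmul_comm _ _)

/-- The left unitor. -/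
noncomputable def lUnitA (A : AObj.{0}) : tensorObjA (cObj ℚ) A ≅ A :=
  mkIsoA (TensorProduct.lid ℚ A.Vinf) (fun k => TensorProduct.lid ℚ (A.V k))
    (fun k => TensorProduct.ext' fun q y => by
      let q' : ℚ := q
      show q' • A.w k y = A.w k (q' • y)
      rw [map_smul])
    (by
      apply TensorProduct.ext'
      intro q a
      let q' : ℚ := q
      show endMap (fun k => (TensorProduct.lid ℚ (A.V k)).toLinearMap)
          (endTmul (V := fun _ => ℚ) (VEnd.mk fun _ => q') (A.sig a)) =
        A.sig (q' • a)
      rw [map_smul, endTmul_lid])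

/-- The right unitor. -/
noncomputable def rUnitA (A : AObj.{0}) : tensorObjA A (cObj ℚ) ≅ A :=
  mkIsoA (TensorProduct.rid ℚ A.Vinf) (fun k => TensorProduct.rid ℚ (A.V k))
    (fun k => TensorProduct.ext' fun y q => by
      let q' : ℚ := q
      show q' • A.w k y = A.w k (q' • y)
      rw [map_smul])
    (by
      apply TensorProduct.ext'
      intro a q
      let q' : ℚ := q
      show endMap (fun k => (TensorProduct.rid ℚ (A.V k)).toLinearMap)
          (endTmul (W := fun _ => ℚ) (A.sig a) (VEnd.mk fun _ => q')) =
        A.sig (q' • a)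
      rw [map_smul, endTmul_rid])

noncomputable instance AMonStruct : MonoidalCategoryStruct AObj.{0} where
  tensorObj := tensorObjA
  whiskerLeft X _ _ f := tensorHomA (𝟙 X) f
  whiskerRight f Y := tensorHomA f (𝟙 Y)
  tensorHom f g := tensorHomA f g
  tensorUnit := cObj ℚ
  associator := assocIsoA
  leftUnitor := lUnitA
  rightUnitor := rUnitA

noncomputable def monoidalA : MonoidalCategory AObj.{0} :=
  MonoidalCategory.ofTensorHom
    (id_tensorHom_id := fun X Y => by
      apply AHom.ext
      · exact TensorProduct.ext' fun x y => rfl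
      · exact funext fun k => TensorProduct.ext' fun x y => rfl)
    (id_tensorHom := by intros; rfl)
    (tensorHom_id := by intros; rfl)
    (tensorHom_comp_tensorHom := fun f₁ f₂ g₁ g₂ => by
      apply AHom.ext
      · exact TensorProduct.ext' fun x y => rfl
      · exact funext fun k => TensorProduct.ext' fun x y => rfl)
    (associator_naturality := fun f₁ f₂ f₃ => by
      apply AHom.ext
      · exact TensorProduct.ext_threefold fun x y z => rfl
      · exact funext fun k => TensorProduct.ext_threefold fun x y z => rfl)
    (leftUnitor_naturality := fun f => by
      apply AHom.ext
      · refine TensorProduct.ext' fun q x => ?_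
        let q' : ℚ := q
        show q' • f.finf x = f.finf (q' • x)
        rw [map_smul]
      · refine funext fun k => TensorProduct.ext' fun q x => ?_
        let q' : ℚ := q
        show q' • f.f k x = f.f k (q' • x)
        rw [map_smul])
    (rightUnitor_naturality := fun f => by
      apply AHom.ext
      · refine TensorProduct.ext' fun x q => ?_
        let q' : ℚ := q
        show q' • f.finf x = f.finf (q' • x)
        rw [map_smul]
      · refine funext fun k => TensorProduct.ext' fun x q => ?_
        let q' : ℚ := q
        show q' • f.f k x = f.f k (q' • x)
        rw [map_smul])
    (pentagon := fun W X Y Z => by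
      apply AHom.ext
      · exact TensorProduct.ext_fourfold fun w x y z => rfl
      · exact funext fun k => TensorProduct.ext_fourfold fun w x y z => rfl)
    (triangle := fun X Y => by
      apply AHom.ext
      · refine TensorProduct.ext_threefold fun x q y => ?_
        let q' : ℚ := q
        show x ⊗ₜ[ℚ] (q' • y) = (q' • x) ⊗ₜ[ℚ] y
        exact (TensorProduct.smul_tmul q' x y).symm
      · refine funext fun k => TensorProduct.ext_threefold fun x q y => ?_
        let q' : ℚ := q
        show x ⊗ₜ[ℚ] (q' • y) = (q' • x) ⊗ₜ[ℚ] y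
        exact (TensorProduct.smul_tmul q' x y).symm)

noncomputable def symmetricA : @SymmetricCategory AObj.{0} _ monoidalA :=
  let _ : MonoidalCategory AObj.{0} := monoidalA
  { braiding := braidIsoA
    braiding_naturality_right := by
      intro X Y Z f
      apply AHom.ext
      · exact TensorProduct.ext' fun x y => rfl
      · exact funext fun k => TensorProduct.ext' fun x y => rfl
    braiding_naturality_left := by
      intro X Y f Z
      apply AHom.ext
      · exact TensorProduct.ext' fun x y => rfl
      · exact funext fun k => TensorProduct.ext' fun x y => rfl
    hexagon_forward := fun X Y Z => by
      apply AHom.ext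
      · exact TensorProduct.ext_threefold fun x y z => rfl
      · exact funext fun k => TensorProduct.ext_threefold fun x y z => rfl
    hexagon_reverse := fun X Y Z => by
      apply AHom.ext
      · exact ext_threefold'' fun x y z => rfl
      · exact funext fun k => ext_threefold'' fun x y z => rfl
    symmetry := fun X Y => by
      apply AHom.ext
      · exact TensorProduct.ext' fun x y => rfl
      · exact funext fun k => TensorProduct.ext' fun x y => rfl }

end Aux

/-- the stalk-wise tensor product (`(A ⊗ B)_k = A_k ⊗ B_k` with diagonal
`ℤ/2`-action, `(A ⊗ B)_∞ = A_∞ ⊗ B_∞`, structure map the composite through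
`colim_n ∏ (A_k ⊗ B_k)`) makes `𝒜(𝒟)` a symmetric monoidal category with unit `cℚ`. -/
theorem statement15 :
    ∃ inst : MonoidalCategory AObj.{0},
      inst.tensorObj = tensorObjA ∧
      inst.tensorUnit = cObj ℚ ∧
      Nonempty (@SymmetricCategory AObj.{0} _ inst) := by
  exact ⟨monoidalA, rfl, rfl, ⟨symmetricA⟩⟩
end

section
/- Let V be an object of the category of differential graded objects of A (each stalk a chain complex of ℚ-vector spaces, ℤ/2 acting on V_k, structure map a chain map). If each V_k is acyclic and (⊞_1 V)^{ℤ/2} is acyclic, then V_∞ is acyclic. Consequently, an object of dg-A is weakly equivalent to zero if and only if all V_k and (⊞_1 V)^{ℤ/2} are acyclic. -/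
open scoped TensorProduct

universe u

variable {V W U : ℕ → Type u}
  [∀ k, AddCommGroup (V k)] [∀ k, Module ℚ (V k)]
  [∀ k, AddCommGroup (W k)] [∀ k, Module ℚ (W k)]
  [∀ k, AddCommGroup (U k)] [∀ k, Module ℚ (U k)]

open CategoryTheory

open CategoryTheory Limits

/-! ### Auxiliary lemmas for statement 18 -/

lemma half_fix {M : Type u} [AddCommGroup M] [Module ℚ M] (wM : M →ₗ[ℚ] M)
    (hw : wM.comp wM = LinearMap.id) (a : M) :
    wM ((1/2 : ℚ) • (a + wM a)) = (1/2 : ℚ) • (a + wM a) := by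
  have h2 : wM (wM a) = a := congrArg (fun g => g a) hw
  rw [map_smul, map_add, h2, add_comm]

lemma half_eq {M : Type u} [AddCommGroup M] [Module ℚ M] (a : M) :
    (1/2 : ℚ) • (a + a) = a := by
  rw [← two_smul ℚ a, smul_smul]
  norm_num

lemma VEnd.mk_eq_mk {x y : ∀ k, V k} (h : ∃ N, ∀ k, N ≤ k → x k = y k) :
    VEnd.mk x = VEnd.mk (V := V) y := by
  obtain ⟨N, hN⟩ := h
  refine (Submodule.Quotient.eq _).mpr ⟨N, fun k hk => ?_⟩
  show x k - y k = 0
  rw [hN k hk, sub_self]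

lemma VEnd.eventually_eq {x y : ∀ k, V k} (h : VEnd.mk x = VEnd.mk (V := V) y) :
    ∃ N, ∀ k, N ≤ k → x k = y k := by
  obtain ⟨N, hN⟩ := (Submodule.Quotient.eq _).mp h
  exact ⟨N, fun k hk => sub_eq_zero.mp (by simpa using hN k hk)⟩

/-- Fixed points of an exact sequence of stalks are exact (average over `ℤ/2`). -/
lemma fixedExact {A B C : AObj.{u}} (φ : A ⟶ B) (ψ : B ⟶ C) (k : ℕ)
    (hex : Function.Exact (φ.f k) (ψ.f k)) {b : B.V k}
    (hb : B.w k b = b) (hb0 : ψ.f k b = 0) :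
    ∃ a, A.w k a = a ∧ φ.f k a = b := by
  obtain ⟨a₀, ha₀⟩ := (hex b).mp hb0
  refine ⟨(1/2 : ℚ) • (a₀ + A.w k a₀), half_fix _ (A.w_sq k) _, ?_⟩
  have he : φ.f k (A.w k a₀) = B.w k (φ.f k a₀) := congrArg (fun g => g a₀) (φ.equivar k)
  rw [map_smul, map_add, he, ha₀, hb, half_eq]

lemma boxAmbient_fst {A B : AObj.{u}} (φ : A ⟶ B) (p : A.Vinf × ∀ k, A.V k) :
    (boxAmbient φ p).1 = φ.finf p.1 := rfl

lemma boxAmbient_snd {A B : AObj.{u}} (φ : A ⟶ B) (p : A.Vinf × ∀ k, A.V k) (k : ℕ) :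
    (boxAmbient φ p).2 k = φ.f k (p.2 k) := rfl

section Complex

variable (X : ℤ → AObj.{u}) (d : ∀ n : ℤ, X (n + 1) ⟶ X n)
  (hd : ∀ n : ℤ, d (n + 1) ≫ d n = 0)

include hd

lemma d_finf_comp (n : ℤ) (a : (X (n + 1 + 1)).Vinf) :
    (d n).finf ((d (n + 1)).finf a) = 0 := by
  have := congrArg (fun ψ => AHom.finf ψ a) (hd n)
  simp at this; exact this

lemma d_f_comp (n : ℤ) (k : ℕ) (a : (X (n + 1 + 1)).V k) :
    (d n).f k ((d (n + 1)).f k a) = 0 := by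
  have := congrArg (fun ψ => AHom.f ψ k a) (hd n)
  simp at this; exact this

lemma boxAmbient_d_comp (n : ℤ) (p : (X (n + 1 + 1)).Vinf × ∀ k, (X (n + 1 + 1)).V k) :
    boxAmbient (d n) (boxAmbient (d (n + 1)) p) = 0 := by
  refine Prod.ext ?_ (funext fun k => ?_)
  · exact d_finf_comp X d hd n p.1
  · exact d_f_comp X d hd n k (p.2 k)

lemma boxW_comp_zero (N : ℕ) (n : ℤ) (q : BoxW N (X (n + 1 + 1))) :
    boxWMap (d n) N (boxWMap (d (n + 1)) N q) = 0 := by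
  apply Subtype.ext
  exact boxAmbient_d_comp X d hd n q

/-- The induction step: exactness of `(⊞_N)^{ℤ/2}` propagates to `(⊞_{N+1})^{ℤ/2}`,
using acyclicity of the fixed points of the stalk `V_N`. -/
lemma boxWExactSucc
    (hk : ∀ (k : ℕ) (n : ℤ), Function.Exact ((d (n + 1)).f k) ((d n).f k)) (N : ℕ)
    (ih : ∀ n : ℤ, Function.Exact (boxWMap (d (n + 1)) N) (boxWMap (d n) N)) :
    ∀ n : ℤ, Function.Exact (boxWMap (d (n + 1)) (N + 1)) (boxWMap (d n) (N + 1)) := by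
  intro n p
  constructor
  · intro hp0
    obtain ⟨⟨v, x⟩, ⟨⟨hsig, hzero⟩, hfix⟩⟩ := p
    -- view `p` as an element of `BoxW N`
    have hmemN : ((v, x) : (X (n + 1)).Vinf × ∀ k, (X (n + 1)).V k) ∈ BoxW N (X (n + 1)) :=
      ⟨⟨hsig, fun k hkN => hzero k (Nat.lt_succ_of_lt hkN)⟩, hfix⟩
    have hval : boxAmbient (d n) ((v, x) : (X (n + 1)).Vinf × ∀ k, (X (n + 1)).V k) = 0 :=
      congrArg Subtype.val hp0
    have hp0' : boxWMap (d n) N (⟨(v, x), hmemN⟩ : BoxW N (X (n + 1))) = 0 :=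
      Subtype.ext hval
    obtain ⟨q, hq⟩ := (ih n ⟨(v, x), hmemN⟩).mp hp0'
    obtain ⟨⟨u, y⟩, ⟨⟨hqsig, hqzero⟩, hqfix⟩⟩ := q
    have hqval : boxAmbient (d (n + 1)) (u, y) = (v, x) := congrArg Subtype.val hq
    have hqu : (d (n + 1)).finf u = v := congrArg Prod.fst hqval
    have hqy : ∀ k, (d (n + 1)).f k (y k) = x k := fun k =>
      congrArg (fun t => t.2 k) hqval
    -- y N is a fixed cycle in the stalk V_N; correct it away using acyclicity
    have hyN : (d (n + 1)).f N (y N) = 0 := by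
      rw [hqy N]; exact hzero N (Nat.lt_succ_self N)
    obtain ⟨z, hzfix, hz⟩ := fixedExact (d (n + 1 + 1)) (d (n + 1)) N (hk N (n + 1))
      (hqfix N) hyN
    -- the element (0, single N z) of BoxW N (X (n+2+1))
    classical
    set sz : ∀ k, (X (n + 1 + 1 + 1)).V k := Pi.single N z with hsz
    have hszk : ∀ k, k ≠ N → sz k = 0 := fun k hkN => Pi.single_eq_of_ne hkN z
    have hszN : sz N = z := Pi.single_eq_same N z
    have hrmem : ((0, sz) : (X (n + 1 + 1 + 1)).Vinf × ∀ k, (X (n + 1 + 1 + 1)).V k) ∈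
        BoxW N (X (n + 1 + 1 + 1)) := by
      refine ⟨⟨?_, fun k hkN => hszk k (Nat.ne_of_lt hkN)⟩, fun k => ?_⟩
      · show (X (n + 1 + 1 + 1)).sig 0 = VEnd.mk sz
        rw [map_zero]
        have : VEnd.mk sz = VEnd.mk (V := fun k => (X (n + 1 + 1 + 1)).V k) 0 :=
          VEnd.mk_eq_mk ⟨N + 1, fun k hkN => hszk k (by omega)⟩
        rw [this, map_zero]
      · show (X (n + 1 + 1 + 1)).w k (sz k) = sz k
        by_cases hkN : k = N
        · subst hkN; rw [hszN]; exact hzfix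
        · rw [hszk k hkN, map_zero]
    -- correct q by the boundary of (0, sz)
    set q' : (X (n + 1 + 1)).Vinf × ∀ k, (X (n + 1 + 1)).V k :=
      ((u, y) : (X (n + 1 + 1)).Vinf × ∀ k, (X (n + 1 + 1)).V k) -
        boxAmbient (d (n + 1 + 1)) (0, sz) with hq'
    have hq'memN : q' ∈ BoxW N (X (n + 1 + 1)) :=
      sub_mem (⟨⟨hqsig, hqzero⟩, hqfix⟩ :
          ((u, y) : (X (n + 1 + 1)).Vinf × ∀ k, (X (n + 1 + 1)).V k) ∈ BoxW N (X (n + 1 + 1)))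
        (boxAmbient_memW (d (n + 1 + 1)) N hrmem)
    have hq'2 : ∀ k, q'.2 k = y k - (d (n + 1 + 1)).f k (sz k) := fun k => rfl
    have hq'memN1 : q' ∈ BoxW (N + 1) (X (n + 1 + 1)) := by
      refine ⟨⟨hq'memN.1.1, fun k hkN1 => ?_⟩, hq'memN.2⟩
      rcases Nat.lt_succ_iff_lt_or_eq.mp hkN1 with hkN | hkN
      · exact hq'memN.1.2 k hkN
      · subst hkN
        rw [hq'2, hszN, hz, sub_self]
    refine ⟨⟨q', hq'memN1⟩, ?_⟩
    apply Subtype.ext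
    show boxAmbient (d (n + 1)) q' = (v, x)
    rw [hq', map_sub, boxAmbient_d_comp X d hd (n + 1) (0, sz), sub_zero, hqval]
  · rintro ⟨q, rfl⟩
    exact boxW_comp_zero X d hd (N + 1) n q

lemma boxWExactAll
    (hk : ∀ (k : ℕ) (n : ℤ), Function.Exact ((d (n + 1)).f k) ((d n).f k))
    (hbox : ∀ n : ℤ, Function.Exact (boxWMap (d (n + 1)) 0) (boxWMap (d n) 0)) :
    ∀ (N : ℕ) (n : ℤ), Function.Exact (boxWMap (d (n + 1)) N) (boxWMap (d n) N) := by
  intro N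
  induction N with
  | zero => exact hbox
  | succ N ih => exact boxWExactSucc X d hd hk N ih

/-- The main chase: acyclicity at `∞` from acyclicity of the stalks and of
`(⊞_1)^{ℤ/2}`. -/
lemma infExact
    (hk : ∀ (k : ℕ) (n : ℤ), Function.Exact ((d (n + 1)).f k) ((d n).f k))
    (hbox : ∀ n : ℤ, Function.Exact (boxWMap (d (n + 1)) 0) (boxWMap (d n) 0)) :
    ∀ n : ℤ, Function.Exact (d (n + 1)).finf (d n).finf := by
  intro n v
  constructor
  · intro hv
    -- choose a representative of sig v and average it
    obtain ⟨x₀, hx₀⟩ := Submodule.mkQ_surjective (evZero (X (n + 1)).V) ((X (n + 1)).sig v)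
    have hx₀' : VEnd.mk x₀ = (X (n + 1)).sig v := hx₀
    set x₁ : ∀ k, (X (n + 1)).V k :=
      fun k => (1/2 : ℚ) • (x₀ k + (X (n + 1)).w k (x₀ k)) with hx₁def
    have hx₁fix : ∀ k, (X (n + 1)).w k (x₁ k) = x₁ k := fun k =>
      half_fix _ ((X (n + 1)).w_sq k) _
    have hwx₀ : VEnd.mk (fun k => (X (n + 1)).w k (x₀ k)) =
        VEnd.mk (V := (X (n + 1)).V) x₀ := by
      have := congrArg (fun g => g v) (X (n + 1)).sig_w
      simp only [LinearMap.comp_apply] at this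
      rw [← hx₀'] at this
      simpa using this
    obtain ⟨N₁, hN₁⟩ := VEnd.eventually_eq hwx₀
    have hx₁eq : ∀ k, N₁ ≤ k → x₁ k = x₀ k := fun k hk' => by
      rw [hx₁def]
      show (1/2 : ℚ) • (x₀ k + (X (n + 1)).w k (x₀ k)) = x₀ k
      rw [hN₁ k hk', half_eq]
    have hx₁' : VEnd.mk x₁ = (X (n + 1)).sig v := by
      rw [← hx₀']
      exact VEnd.mk_eq_mk ⟨N₁, hx₁eq⟩
    -- the differential kills x₁ eventually
    have hdx₁ : VEnd.mk (fun k => (d n).f k (x₁ k)) =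
        VEnd.mk (V := (X n).V) 0 := by
      have hc := congrArg (fun g => g v) (d n).comm
      simp only [LinearMap.comp_apply] at hc
      rw [← hx₁'] at hc
      rw [endMap_mk] at hc
      rw [hc, hv, map_zero, map_zero]
    obtain ⟨N₂, hN₂⟩ := VEnd.eventually_eq hdx₁
    set N := N₂
    set x₂ : ∀ k, (X (n + 1)).V k := fun k => if k < N then 0 else x₁ k with hx₂def
    have hmem : ((v, x₂) : (X (n + 1)).Vinf × ∀ k, (X (n + 1)).V k) ∈
        BoxW N (X (n + 1)) := by
      refine ⟨⟨?_, fun k hkN => by simp [hx₂def, hkN]⟩, fun k => ?_⟩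
      · show (X (n + 1)).sig v = VEnd.mk x₂
        rw [← hx₁']
        refine VEnd.mk_eq_mk ⟨N, fun k hk' => ?_⟩
        simp [hx₂def, Nat.not_lt.mpr hk']
      · by_cases hkN : k < N
        · simp [hx₂def, hkN]
        · simpa [hx₂def, hkN] using hx₁fix k
    have hcycle : boxWMap (d n) N (⟨(v, x₂), hmem⟩ : BoxW N (X (n + 1))) = 0 := by
      apply Subtype.ext
      refine Prod.ext hv (funext fun k => ?_)
      show (d n).f k (x₂ k) = 0
      by_cases hkN : k < N
      · simp [hx₂def, hkN]
      · have : x₂ k = x₁ k := by simp [hx₂def, hkN]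
        rw [this]
        exact hN₂ k (Nat.not_lt.mp hkN)
    obtain ⟨q, hq⟩ := (boxWExactAll X d hd hk hbox N n ⟨(v, x₂), hmem⟩).mp hcycle
    have hqval : boxAmbient (d (n + 1)) (q : (X (n + 1 + 1)).Vinf × ∀ k, (X (n + 1 + 1)).V k)
        = (v, x₂) := congrArg Subtype.val hq
    exact ⟨(q : (X (n + 1 + 1)).Vinf × ∀ k, (X (n + 1 + 1)).V k).1,
      congrArg Prod.fst hqval⟩
  · rintro ⟨u, rfl⟩
    exact d_finf_comp X d hd n u

/-- The converse chase: acyclicity of `(⊞_1)^{ℤ/2}` from acyclicity of the stalks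
and of `V_∞`. -/
lemma boxWExactOfInf
    (hk : ∀ (k : ℕ) (n : ℤ), Function.Exact ((d (n + 1)).f k) ((d n).f k))
    (hinf : ∀ n : ℤ, Function.Exact (d (n + 1)).finf (d n).finf) :
    ∀ n : ℤ, Function.Exact (boxWMap (d (n + 1)) 0) (boxWMap (d n) 0) := by
  intro n p
  constructor
  · intro hp0
    obtain ⟨⟨v, x⟩, ⟨⟨hsig, hzero0⟩, hfix⟩⟩ := p
    have hval : boxAmbient (d n) ((v, x) : (X (n + 1)).Vinf × ∀ k, (X (n + 1)).V k) = 0 :=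
      congrArg Subtype.val hp0
    have hdv : (d n).finf v = 0 := congrArg Prod.fst hval
    have hdx : ∀ k, (d n).f k (x k) = 0 := fun k => congrArg (fun t => t.2 k) hval
    -- lift v at infinity
    obtain ⟨u, hu⟩ := (hinf n v).mp hdv
    -- choose and average a representative of sig u
    obtain ⟨y₀, hy₀⟩ := Submodule.mkQ_surjective (evZero (X (n + 1 + 1)).V)
      ((X (n + 1 + 1)).sig u)
    have hy₀' : VEnd.mk y₀ = (X (n + 1 + 1)).sig u := hy₀
    set y₁ : ∀ k, (X (n + 1 + 1)).V k :=
      fun k => (1/2 : ℚ) • (y₀ k + (X (n + 1 + 1)).w k (y₀ k)) with hy₁def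
    have hy₁fix : ∀ k, (X (n + 1 + 1)).w k (y₁ k) = y₁ k := fun k =>
      half_fix _ ((X (n + 1 + 1)).w_sq k) _
    have hwy₀ : VEnd.mk (fun k => (X (n + 1 + 1)).w k (y₀ k)) =
        VEnd.mk (V := (X (n + 1 + 1)).V) y₀ := by
      have := congrArg (fun g => g u) (X (n + 1 + 1)).sig_w
      simp only [LinearMap.comp_apply] at this
      rw [← hy₀'] at this
      simpa using this
    obtain ⟨N₁, hN₁⟩ := VEnd.eventually_eq hwy₀
    have hy₁eq : ∀ k, N₁ ≤ k → y₁ k = y₀ k := fun k hk' => by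
      rw [hy₁def]
      show (1/2 : ℚ) • (y₀ k + (X (n + 1 + 1)).w k (y₀ k)) = y₀ k
      rw [hN₁ k hk', half_eq]
    have hy₁' : VEnd.mk y₁ = (X (n + 1 + 1)).sig u := by
      rw [← hy₀']
      exact VEnd.mk_eq_mk ⟨N₁, hy₁eq⟩
    -- d y₁ agrees with x eventually
    have hdy₁ : VEnd.mk (fun k => (d (n + 1)).f k (y₁ k)) =
        VEnd.mk (V := (X (n + 1)).V) x := by
      have hc := congrArg (fun g => g u) (d (n + 1)).comm
      simp only [LinearMap.comp_apply] at hc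
      rw [← hy₁'] at hc
      rw [endMap_mk] at hc
      rw [hc, hu, hsig]
    obtain ⟨K, hK⟩ := VEnd.eventually_eq hdy₁
    -- correct y₁ below K using acyclicity of the fixed stalks
    have hcorr : ∀ k : ℕ, ∃ z : (X (n + 1 + 1)).V k,
        (X (n + 1 + 1)).w k z = z ∧
          (d (n + 1)).f k z = x k - (d (n + 1)).f k (y₁ k) := by
      intro k
      have hbfix : (X (n + 1)).w k (x k - (d (n + 1)).f k (y₁ k)) =
          x k - (d (n + 1)).f k (y₁ k) := by
        have he : (d (n + 1)).f k ((X (n + 1 + 1)).w k (y₁ k)) =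
            (X (n + 1)).w k ((d (n + 1)).f k (y₁ k)) :=
          congrArg (fun g => g (y₁ k)) ((d (n + 1)).equivar k)
        rw [map_sub, hfix k, ← he, hy₁fix k]
      have hb0 : (d n).f k (x k - (d (n + 1)).f k (y₁ k)) = 0 := by
        rw [map_sub, hdx k, d_f_comp X d hd n k, sub_self]
      exact fixedExact (d (n + 1)) (d n) k (hk k n) hbfix hb0
    classical
    choose z hzfix hz using hcorr
    set y : ∀ k, (X (n + 1 + 1)).V k := fun k => if k < K then y₁ k + z k else y₁ k
      with hydef
    have hyfix : ∀ k, (X (n + 1 + 1)).w k (y k) = y k := by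
      intro k
      by_cases hkK : k < K
      · simp only [hydef, if_pos hkK, map_add, hy₁fix k, hzfix k]
      · simp only [hydef, if_neg hkK, hy₁fix k]
    have hysig : (X (n + 1 + 1)).sig u = VEnd.mk y := by
      rw [← hy₁']
      refine VEnd.mk_eq_mk ⟨K, fun k hk' => ?_⟩
      simp [hydef, Nat.not_lt.mpr hk']
    have hdy : ∀ k, (d (n + 1)).f k (y k) = x k := by
      intro k
      by_cases hkK : k < K
      · simp only [hydef, if_pos hkK, map_add, hz k]
        abel
      · simp only [hydef, if_neg hkK]
        exact hK k (Nat.not_lt.mp hkK)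
    have hqmem : ((u, y) : (X (n + 1 + 1)).Vinf × ∀ k, (X (n + 1 + 1)).V k) ∈
        BoxW 0 (X (n + 1 + 1)) :=
      ⟨⟨hysig, fun k hk0 => absurd hk0 (Nat.not_lt_zero k)⟩, hyfix⟩
    refine ⟨⟨(u, y), hqmem⟩, ?_⟩
    apply Subtype.ext
    exact Prod.ext hu (funext hdy)
  · rintro ⟨q, rfl⟩
    exact boxW_comp_zero X d hd 0 n q

end Complex

/-- let `V` be a chain complex in `𝒜(𝒟)` (objects `X n` of `𝒜(𝒟)` and
differentials `d n : X (n+1) ⟶ X n` with `d ∘ d = 0`; each stalk is then a chain complex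
of `ℚ`-vector spaces with `ℤ/2`-action and the structure maps are chain maps).  If every
stalk complex `V_k` is acyclic (exact) and the complex of global sections
`(⊞_1 V)^{ℤ/2}` is acyclic, then the stalk `V_∞` at `∞` is acyclic.  Consequently `V` is
weakly equivalent to zero (all stalks `V_k`, `V_∞` acyclic) if and only if all the `V_k`
and `(⊞_1 V)^{ℤ/2}` are acyclic. -/
theorem statement18 (X : ℤ → AObj.{u}) (d : ∀ n : ℤ, X (n + 1) ⟶ X n)
    (hd : ∀ n : ℤ, d (n + 1) ≫ d n = 0) :
    ((∀ (k : ℕ) (n : ℤ), Function.Exact ((d (n + 1)).f k) ((d n).f k)) →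
      (∀ n : ℤ, Function.Exact (boxWMap (d (n + 1)) 0) (boxWMap (d n) 0)) →
      ∀ n : ℤ, Function.Exact (d (n + 1)).finf (d n).finf) ∧
    (((∀ (k : ℕ) (n : ℤ), Function.Exact ((d (n + 1)).f k) ((d n).f k)) ∧
        (∀ n : ℤ, Function.Exact (d (n + 1)).finf (d n).finf)) ↔
      ((∀ (k : ℕ) (n : ℤ), Function.Exact ((d (n + 1)).f k) ((d n).f k)) ∧
        (∀ n : ℤ, Function.Exact (boxWMap (d (n + 1)) 0) (boxWMap (d n) 0)))) := by
  refine ⟨infExact X d hd, ?_⟩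
  constructor
  · rintro ⟨hk, hinf⟩
    exact ⟨hk, boxWExactOfInf X d hd hk hinf⟩
  · rintro ⟨hk, hbox⟩
    exact ⟨hk, infExact X d hd hk hbox⟩
end
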